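/- Let p = (p₀,p₁,p₂,p₃) be a probability vector. Define the four (unnormalized) Bell vectors in ℂ⁴: B₀ = (1,0,0,1)/√2, B₁ = (0,1,1,0)/√2, B₂ = (0,1,−1,0)/√2, B₃ = (1,0,0,−1)/√2, and the 4×4 matrix S := Σ_{m=0}^{3} √(p_m)·B_m B_m†. Then S² equals the Choi–Jamiołkowski matrix of the Pauli channel of p, and for each i ∈ {1,2,3}, Tr(S·(σ_i ⊗ I)·S·(σ_i ⊗ I)) = P_i, where σ_i are the 2×2 Pauli matrices, ⊗ is the Kronecker product, and P_i := 2(√(p₀p_i) + √(p_j p_k)) with (i,j,k) a permutation of (1,2,3). Moreover, for i ≠ j in {1,2,3}, Tr(S·(σ_i ⊗ I)·S·(σ_j ⊗ I)) = 0. -/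

import Mathlib

open Matrix

/-- The pair of qubit indices encoded by an index of `Fin 4` (binary expansion),
so that `Fin 4 ≃ Fin 2 × Fin 2` in the standard basis order `00, 01, 10, 11`. -/
def toPair (i : Fin 4) : Fin 2 × Fin 2 :=
  (⟨i.val / 2, by omega⟩, ⟨i.val % 2, by omega⟩)

/-- Kronecker product of two `2 × 2` complex matrices, as a `4 × 4` matrix. -/
def kron (A B : Matrix (Fin 2) (Fin 2) ℂ) : Matrix (Fin 4) (Fin 4) ℂ :=
  Matrix.of fun i j => A (toPair i).1 (toPair j).1 * B (toPair i).2 (toPair j).2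

/-- The inverse of √2, as a complex number. -/
noncomputable def invSqrt2 : ℂ := ((Real.sqrt 2)⁻¹ : ℝ)

lemma kron_x : kron !![0, 1; 1, 0] 1 = !![0,0,1,0; 0,0,0,1; 1,0,0,0; 0,1,0,0] := by
  ext i j; fin_cases i <;> fin_cases j <;>
    simp [kron, toPair, Matrix.one_apply, show ((3:Fin 4).val)=3 from rfl,
      show ((2:Fin 4).val)=2 from rfl, show ((1:Fin 4).val)=1 from rfl,
      show ((0:Fin 4).val)=0 from rfl, Matrix.vecHead, Matrix.vecTail]

lemma kron_y : kron !![0, -Complex.I; Complex.I, 0] 1 =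
    !![0,0,-Complex.I,0; 0,0,0,-Complex.I; Complex.I,0,0,0; 0,Complex.I,0,0] := by
  ext i j; fin_cases i <;> fin_cases j <;>
    simp [kron, toPair, Matrix.one_apply, show ((3:Fin 4).val)=3 from rfl,
      show ((2:Fin 4).val)=2 from rfl, show ((1:Fin 4).val)=1 from rfl,
      show ((0:Fin 4).val)=0 from rfl, Matrix.vecHead, Matrix.vecTail]

lemma kron_z : kron !![1, 0; 0, -1] 1 = !![1,0,0,0; 0,1,0,0; 0,0,-1,0; 0,0,0,-1] := by
  ext i j; fin_cases i <;> fin_cases j <;>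
    simp [kron, toPair, Matrix.one_apply, show ((3:Fin 4).val)=3 from rfl,
      show ((2:Fin 4).val)=2 from rfl, show ((1:Fin 4).val)=1 from rfl,
      show ((0:Fin 4).val)=0 from rfl, Matrix.vecHead, Matrix.vecTail]

set_option maxHeartbeats 1600000 in
/-- For a probability vector `p`, with the Bell vectors `B₀,…,B₃` and
`S = Σ_m √(p_m) B_m B_m†`, the matrix `S²` equals the Choi–Jamiołkowski matrix of the
Pauli channel of `p`; moreover `Tr(S (σᵢ⊗I) S (σᵢ⊗I)) = Pᵢ` for `i ∈ {1,2,3}` and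
`Tr(S (σᵢ⊗I) S (σⱼ⊗I)) = 0` for `i ≠ j`. -/
theorem choi_sqrt_W_matrix (p : Fin 4 → ℝ)
    (hp : ∀ m, 0 ≤ p m) (hsum : p 0 + p 1 + p 2 + p 3 = 1)
    (B : Fin 4 → Fin 4 → ℂ)
    (hB0 : B 0 = ![invSqrt2, 0, 0, invSqrt2])
    (hB1 : B 1 = ![0, invSqrt2, invSqrt2, 0])
    (hB2 : B 2 = ![0, invSqrt2, -invSqrt2, 0])
    (hB3 : B 3 = ![invSqrt2, 0, 0, -invSqrt2])
    (S : Matrix (Fin 4) (Fin 4) ℂ)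
    (hS : S = ∑ m : Fin 4, (Real.sqrt (p m) : ℂ) • Matrix.vecMulVec (B m) (star (B m)))
    (σ : Fin 3 → Matrix (Fin 2) (Fin 2) ℂ)
    (hσ : σ = ![!![0, 1; 1, 0], !![0, -Complex.I; Complex.I, 0], !![1, 0; 0, -1]])
    (P : Fin 3 → ℝ)
    (hP : P = ![2 * (Real.sqrt (p 0 * p 1) + Real.sqrt (p 2 * p 3)),
                2 * (Real.sqrt (p 0 * p 2) + Real.sqrt (p 1 * p 3)),
                2 * (Real.sqrt (p 0 * p 3) + Real.sqrt (p 1 * p 2))]) :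
    S * S = (1 / 2 : ℂ) •
        !![((p 0 + p 3 : ℝ) : ℂ), 0, 0, ((p 0 - p 3 : ℝ) : ℂ);
           0, ((p 1 + p 2 : ℝ) : ℂ), ((p 1 - p 2 : ℝ) : ℂ), 0;
           0, ((p 1 - p 2 : ℝ) : ℂ), ((p 1 + p 2 : ℝ) : ℂ), 0;
           ((p 0 - p 3 : ℝ) : ℂ), 0, 0, ((p 0 + p 3 : ℝ) : ℂ)] ∧
    (∀ i : Fin 3,
      Matrix.trace (S * kron (σ i) 1 * S * kron (σ i) 1) = ((P i : ℝ) : ℂ)) ∧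
    (∀ i j : Fin 3, i ≠ j →
      Matrix.trace (S * kron (σ i) 1 * S * kron (σ j) 1) = 0) := by
  have hc : (invSqrt2 : ℂ) * invSqrt2 = 1/2 := by
    unfold invSqrt2
    rw [← Complex.ofReal_mul, ← mul_inv, Real.mul_self_sqrt (by norm_num : (0:ℝ) ≤ 2)]
    norm_num
  have hstar : (starRingEnd ℂ) invSqrt2 = invSqrt2 := by
    unfold invSqrt2; exact Complex.conj_ofReal _
  set a := (Real.sqrt (p 0) : ℂ) with ha
  set b := (Real.sqrt (p 1) : ℂ) with hb
  set c := (Real.sqrt (p 2) : ℂ) with hcc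
  set d := (Real.sqrt (p 3) : ℂ) with hd
  have hSM : S = (1/2 : ℂ) •
      !![a+d, 0, 0, a-d; 0, b+c, b-c, 0; 0, b-c, b+c, 0; a-d, 0, 0, a+d] := by
    subst hS
    ext i j
    fin_cases i <;> fin_cases j <;>
      simp [Fin.sum_univ_four, hB0, hB1, hB2, hB3, Matrix.vecMulVec_apply,
        Matrix.vecHead, Matrix.vecTail, hstar, ha, hb, hcc, hd, -Matrix.cons_vecMulVec,
        -Matrix.vecMulVec_cons] <;>
      ring_nf <;> rw [sq] <;> rw [hc] <;> ring
  have hps : ∀ m, ((p m : ℝ):ℂ) = (Real.sqrt (p m):ℂ) * (Real.sqrt (p m):ℂ) := fun m => by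
    rw [← Complex.ofReal_mul, Real.mul_self_sqrt (hp m)]
  have hqs : ∀ m n, ((Real.sqrt (p m * p n) : ℝ):ℂ) =
      (Real.sqrt (p m):ℂ) * (Real.sqrt (p n):ℂ) := fun m n => by
    rw [Real.sqrt_mul (hp m), Complex.ofReal_mul]
  have hMx : (!![a+d, 0, 0, a-d; 0, b+c, b-c, 0; 0, b-c, b+c, 0; a-d, 0, 0, a+d]
        : Matrix (Fin 4) (Fin 4) ℂ) * !![0,0,1,0; 0,0,0,1; 1,0,0,0; 0,1,0,0] =
      !![0, a-d, a+d, 0; b-c, 0, 0, b+c; b+c, 0, 0, b-c; 0, a+d, a-d, 0] := by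
    ext i j
    fin_cases i <;> fin_cases j <;>
      simp [Matrix.mul_apply, Fin.sum_univ_four, Matrix.vecHead, Matrix.vecTail]
  have hMy : (!![a+d, 0, 0, a-d; 0, b+c, b-c, 0; 0, b-c, b+c, 0; a-d, 0, 0, a+d]
        : Matrix (Fin 4) (Fin 4) ℂ) *
        !![0,0,-Complex.I,0; 0,0,0,-Complex.I; Complex.I,0,0,0; 0,Complex.I,0,0] =
      !![0, Complex.I*(a-d), -Complex.I*(a+d), 0;
         Complex.I*(b-c), 0, 0, -Complex.I*(b+c);
         Complex.I*(b+c), 0, 0, -Complex.I*(b-c);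
         0, Complex.I*(a+d), -Complex.I*(a-d), 0] := by
    ext i j
    fin_cases i <;> fin_cases j <;>
      simp [Matrix.mul_apply, Fin.sum_univ_four, Matrix.vecHead, Matrix.vecTail] <;> try ring
  have hMz : (!![a+d, 0, 0, a-d; 0, b+c, b-c, 0; 0, b-c, b+c, 0; a-d, 0, 0, a+d]
        : Matrix (Fin 4) (Fin 4) ℂ) * !![1,0,0,0; 0,1,0,0; 0,0,-1,0; 0,0,0,-1] =
      !![a+d, 0, 0, -(a-d); 0, b+c, -(b-c), 0; 0, b-c, -(b+c), 0; a-d, 0, 0, -(a+d)] := by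
    ext i j
    fin_cases i <;> fin_cases j <;>
      simp [Matrix.mul_apply, Fin.sum_univ_four, Matrix.vecHead, Matrix.vecTail]
  subst hσ hP
  refine ⟨?_, ?_, ?_⟩
  · rw [hSM]
    ext i j
    fin_cases i <;> fin_cases j <;>
      (simp [Matrix.mul_apply, Fin.sum_univ_four, Matrix.vecHead, Matrix.vecTail]) <;>
      (push_cast; simp only [hps]; ring)
  · intro i
    fin_cases i <;>
      simp only [Fin.isValue, Matrix.cons_val_zero, Matrix.cons_val_one, Matrix.head_cons,
        Matrix.cons_val_two, Matrix.tail_cons, kron_x, kron_y, kron_z, hSM,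
        Matrix.smul_mul, Matrix.mul_smul, Matrix.trace_smul, smul_smul, smul_eq_mul,
        Matrix.mul_assoc, Fin.mk_zero, Fin.mk_one, show ((⟨2, by norm_num⟩ : Fin 3)) = 2 from rfl] <;>
      rw [← Matrix.mul_assoc]
    · rw [hMx]
      rw [Matrix.trace]
      simp [Matrix.mul_apply, Fin.sum_univ_four, Matrix.diag]
      push_cast
      simp only [hqs]; ring
    · rw [hMy]
      rw [Matrix.trace]
      simp [Matrix.mul_apply, Fin.sum_univ_four, Matrix.diag]
      push_cast
      simp only [hqs]; ring_nf; try simp [Complex.I_sq]; try ring_nf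
      simp only [ha, hb, hcc, hd]; ring
    · rw [hMz]
      rw [Matrix.trace]
      simp [Matrix.mul_apply, Fin.sum_univ_four, Matrix.diag]
      push_cast
      simp only [hqs]; ring
  · intro i j hij
    fin_cases i <;> fin_cases j <;> first
      | exact absurd rfl hij
      | (simp only [Fin.isValue, Matrix.cons_val_zero, Matrix.cons_val_one, Matrix.head_cons,
           Matrix.cons_val_two, Matrix.tail_cons, kron_x, kron_y, kron_z, hSM,
           Matrix.smul_mul, Matrix.mul_smul, Matrix.trace_smul, smul_smul, smul_eq_mul,
           Matrix.mul_assoc, Fin.mk_zero, Fin.mk_one, show ((⟨2, by norm_num⟩ : Fin 3)) = 2 from rfl]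
         rw [← Matrix.mul_assoc]
         first
           | rw [hMx] | rw [hMy] | rw [hMz]
         first
           | rw [hMx] | rw [hMy] | rw [hMz]
         rw [Matrix.trace]
         simp [Matrix.mul_apply, Fin.sum_univ_four, Matrix.diag]
         try ring_nf)
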